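/- arXiv:1801.08287 — 3 statements merged into one kernel-verified Lean document; each statement's English description precedes it below -/
import Mathlib

section
/- Suppose that μ-almost everywhere the conditional expectation of G' given the σ-algebra 𝒢 generated by (S_t, R_{t+1}, S_{t+1}) equals j(S_{t+1}). Define the TD error δ = R_{t+1} + γ(S_{t+1})·j(S_{t+1}) − j(S_t). Then for every state s with μ(S_t = s) > 0, E[ γ(S_{t+1})·λ(S_{t+1})·δ·(G' − j(S_{t+1})) | S_t = s ] = 0. -/
open MeasureTheory ProbabilityTheory

/-- If the conditional expectation of `G'` given the σ-algebra generated by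
`(S_t, R_{t+1}, S_{t+1})` is `j (S_{t+1})` a.e., then with TD error
`δ = R_{t+1} + γ(S_{t+1})·j(S_{t+1}) − j(S_t)`, for every state `s` with `μ(S_t = s) > 0`,
`E[ γ(S_{t+1})·λ(S_{t+1})·δ·(G' − j(S_{t+1})) | S_t = s ] = 0`. -/
theorem td_error_orthogonality {Ω : Type*} [MeasurableSpace Ω] (μ : Measure Ω)
    [IsProbabilityMeasure μ]
    {S : Type*} [Fintype S] [Nonempty S] [MeasurableSpace S] [MeasurableSingletonClass S]
    (St St1 : Ω → S) (R G' : Ω → ℝ)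
    (hSt : Measurable St) (hSt1 : Measurable St1)
    (hR : Measurable R) (hG' : Measurable G')
    (hG'int : Integrable G' μ) (hRbd : ∃ C, ∀ ω, |R ω| ≤ C)
    (γ lam : S → ℝ) (hγ : ∀ s, γ s ∈ Set.Icc (0 : ℝ) 1) (hlam : ∀ s, lam s ∈ Set.Icc (0 : ℝ) 1)
    (j : S → ℝ)
    (hcond : μ[G' | MeasurableSpace.comap (fun ω => (St ω, R ω, St1 ω)) inferInstance]
        =ᵐ[μ] fun ω => j (St1 ω))
    (δ : Ω → ℝ) (hδ : δ = fun ω => R ω + γ (St1 ω) * j (St1 ω) - j (St ω)) :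
    ∀ s : S, 0 < μ {ω | St ω = s} →
      ∫ ω, γ (St1 ω) * lam (St1 ω) * δ ω * (G' ω - j (St1 ω))
          ∂(μ[|{ω | St ω = s}]) = 0 := by
  classical
  intro s _
  obtain ⟨C, hC⟩ := hRbd
  obtain ⟨M, hM⟩ := Finite.exists_le (fun t => |j t|)
  have hM0 : (0:ℝ) ≤ M := le_trans (abs_nonneg _) (hM (Classical.arbitrary S))
  -- the set
  set A : Set Ω := {ω | St ω = s} with hA
  have hAmeas : MeasurableSet A := hSt (measurableSet_singleton s)
  -- the m-measurable bounded factor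
  set φ : S × ℝ × S → ℝ := fun x =>
    (if x.1 = s then (1:ℝ) else 0) *
      (γ x.2.2 * lam x.2.2 * (x.2.1 + γ x.2.2 * j x.2.2 - j x.1)) with hφdef
  have hφ : Measurable φ := by
    apply Measurable.mul
    · exact (measurable_of_countable (fun a : S => if a = s then (1:ℝ) else 0)).comp
        measurable_fst
    · fun_prop (disch := exact measurable_of_countable _)
  set F : Ω → ℝ := fun ω => φ (St ω, R ω, St1 ω) with hFdef
  have hFmeas : AEStronglyMeasurable F μ :=
    (hφ.comp (hSt.prodMk (hR.prodMk hSt1))).aestronglyMeasurable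
  have hm : MeasurableSpace.comap (fun ω => (St ω, R ω, St1 ω))
      (inferInstance : MeasurableSpace (S × ℝ × S)) ≤ _ :=
    measurable_iff_comap_le.mp ((hSt.prodMk (hR.prodMk hSt1)))
  set m : MeasurableSpace Ω :=
    MeasurableSpace.comap (fun ω => (St ω, R ω, St1 ω)) inferInstance with hmdef
  have hFm : Measurable[m] F := by
    have hp : Measurable[m] (fun ω => (St ω, R ω, St1 ω)) :=
      measurable_iff_comap_le.mpr le_rfl
    exact hφ.comp hp
  have hFsm : StronglyMeasurable[m] F := hFm.stronglyMeasurable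
  -- bound on F
  have hFbd : ∀ ω, ‖F ω‖ ≤ C + (M + M) := by
    intro ω
    have h1 : |γ (St1 ω)| ≤ 1 := abs_le.mpr ⟨le_trans (by norm_num) (hγ _).1, (hγ _).2⟩
    have h2 : |lam (St1 ω)| ≤ 1 := abs_le.mpr ⟨le_trans (by norm_num) (hlam _).1, (hlam _).2⟩
    have h3 : |R ω + γ (St1 ω) * j (St1 ω) - j (St ω)| ≤ C + (M + M) := by
      have hj1 : |j (St1 ω)| ≤ M := hM _
      have hj2 : |j (St ω)| ≤ M := hM _
      have h4 : |γ (St1 ω) * j (St1 ω)| ≤ M := by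
        rw [abs_mul]
        calc |γ (St1 ω)| * |j (St1 ω)| ≤ 1 * M :=
              mul_le_mul h1 hj1 (abs_nonneg _) zero_le_one
          _ = M := one_mul M
      calc |R ω + γ (St1 ω) * j (St1 ω) - j (St ω)|
          ≤ |R ω + γ (St1 ω) * j (St1 ω)| + |j (St ω)| := abs_sub _ _
        _ ≤ (|R ω| + |γ (St1 ω) * j (St1 ω)|) + |j (St ω)| := by
              gcongr; exact abs_add_le _ _
        _ ≤ (C + M) + M := by
              have hRC := hC ω
              gcongr <;> assumption
        _ = C + (M + M) := by ring
    have hite : |(if St ω = s then (1:ℝ) else 0)| ≤ 1 := by split <;> norm_num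
    show |φ (St ω, R ω, St1 ω)| ≤ C + (M + M)
    have hCM : (0:ℝ) ≤ C + (M + M) := by
      have := le_trans (abs_nonneg (R ω)) (hC ω); linarith
    calc |φ (St ω, R ω, St1 ω)|
        = |(if St ω = s then (1:ℝ) else 0)| *
            (|γ (St1 ω)| * |lam (St1 ω)| * |R ω + γ (St1 ω) * j (St1 ω) - j (St ω)|) := by
          by_cases h : St ω = s <;> simp [hφdef, h, abs_mul]
      _ ≤ 1 * (1 * 1 * (C + (M + M))) := by
          gcongr <;> first
            | exact hite
            | exact h1
            | exact h2
            | exact h3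
            | positivity
      _ = C + (M + M) := by ring
  -- integrability
  have hFG'int : Integrable (F * G') μ :=
    hG'int.bdd_mul hFmeas (Filter.Eventually.of_forall hFbd)
  have hjSt1int : Integrable (fun ω => j (St1 ω)) μ := by
    refine Integrable.mono' (integrable_const M) ?_ (Filter.Eventually.of_forall fun ω => hM _)
    exact ((measurable_of_countable j).comp hSt1).aestronglyMeasurable
  have hFjint : Integrable (F * fun ω => j (St1 ω)) μ :=
    hjSt1int.bdd_mul hFmeas (Filter.Eventually.of_forall hFbd)
  -- key orthogonality via conditional expectation
  have hkey : ∫ ω, F ω * G' ω ∂μ = ∫ ω, F ω * j (St1 ω) ∂μ := by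
    have hmul : μ[F * G' | m] =ᵐ[μ] F * μ[G' | m] :=
      condExp_mul_of_stronglyMeasurable_left hFsm hFG'int hG'int
    have h1 : ∫ ω, F ω * G' ω ∂μ = ∫ ω, (μ[F * G' | m]) ω ∂μ :=
      (integral_condExp hm).symm
    have h2 : ∫ ω, (μ[F * G' | m]) ω ∂μ = ∫ ω, F ω * (μ[G' | m]) ω ∂μ :=
      integral_congr_ae hmul
    have h3 : ∫ ω, F ω * (μ[G' | m]) ω ∂μ = ∫ ω, F ω * j (St1 ω) ∂μ := by
      refine integral_congr_ae ?_
      filter_upwards [hcond] with ω hω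
      rw [hω]
    rw [h1, h2, h3]
  -- the set integral vanishes
  clear hFm hFsm hcond hmdef hm
  clear_value m
  clear m
  have hset : ∫ ω in A, γ (St1 ω) * lam (St1 ω) * δ ω * (G' ω - j (St1 ω)) ∂μ = 0 := by
    have hind : ∀ ω, A.indicator
        (fun ω => γ (St1 ω) * lam (St1 ω) * δ ω * (G' ω - j (St1 ω))) ω
        = F ω * (G' ω - j (St1 ω)) := by
      intro ω
      by_cases h : St ω = s
      · simp only [Set.indicator_of_mem (show ω ∈ A from h), hFdef, hφdef, if_pos h, hδ]
        ring
      · simp only [Set.indicator_of_notMem (show ω ∉ A from h), hFdef, hφdef, if_neg h]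
        ring
    rw [← integral_indicator hAmeas]
    calc ∫ ω, A.indicator
          (fun ω => γ (St1 ω) * lam (St1 ω) * δ ω * (G' ω - j (St1 ω))) ω ∂μ
        = ∫ ω, F ω * (G' ω - j (St1 ω)) ∂μ := by
          exact integral_congr_ae (Filter.Eventually.of_forall hind)
      _ = ∫ ω, (F ω * G' ω - F ω * j (St1 ω)) ∂μ := by
          congr 1; funext ω; ring
      _ = (∫ ω, F ω * G' ω ∂μ) - ∫ ω, F ω * j (St1 ω) ∂μ := integral_sub hFG'int hFjint
      _ = 0 := by rw [hkey]; ring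
  rw [ProbabilityTheory.cond, integral_smul_measure, hset, smul_zero]
end

section
/- Assume: (i) μ-almost everywhere, G = R_{t+1} + γ(S_{t+1})·(1 − λ(S_{t+1}))·j(S_{t+1}) + γ(S_{t+1})·λ(S_{t+1})·G' (the λ-return recursion bootstrapped with j); (ii) for every state s with μ(S_t = s) > 0, j(s) = E[G | S_t = s] and v(s) = E[(G − j(s))² | S_t = s]; (iii) μ-almost everywhere the conditional expectation of G' given 𝒢 equals j(S_{t+1}); and (iv) μ-almost everywhere the conditional expectation of (G' − j(S_{t+1}))² given 𝒢 equals v(S_{t+1}). Define the TD error δ = R_{t+1} + γ(S_{t+1})·j(S_{t+1}) − j(S_t). Then for every state s with μ(S_t = s) > 0: j(s) = E[ R_{t+1} + γ(S_{t+1})·j(S_{t+1}) | S_t = s ] and v(s) = E[ δ² + γ(S_{t+1})²·λ(S_{t+1})²·v(S_{t+1}) | S_t = s ]. -/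
open MeasureTheory ProbabilityTheory


lemma integral_mul_eq_of_condexp {Ω α : Type*} [mΩ : MeasurableSpace Ω] [MeasurableSpace α]
    (μ : Measure Ω) [IsProbabilityMeasure μ]
    {T : Ω → α} (hT : Measurable T)
    {Y h : Ω → ℝ} (hY : Integrable Y μ)
    (hcond : μ[Y | MeasurableSpace.comap T inferInstance] =ᵐ[μ] h)
    {f : α → ℝ} (hf : Measurable f) {C : ℝ} (hC : ∀ ω, |f (T ω)| ≤ C) :
    ∫ ω, f (T ω) * Y ω ∂μ = ∫ ω, f (T ω) * h ω ∂μ := by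
  have hm : MeasurableSpace.comap T inferInstance ≤ mΩ := hT.comap_le
  have hTm : Measurable[MeasurableSpace.comap T inferInstance] T :=
    Measurable.of_comap_le le_rfl
  have hfT : StronglyMeasurable[MeasurableSpace.comap T inferInstance] (fun ω => f (T ω)) :=
    (hf.comp hTm).stronglyMeasurable
  have hfT0 : AEStronglyMeasurable (fun ω => f (T ω)) μ :=
    (hf.comp hT).aestronglyMeasurable
  have hfY : Integrable ((fun ω => f (T ω)) * Y) μ :=
    hY.bdd_mul hfT0 (Filter.Eventually.of_forall (by simpa [Real.norm_eq_abs] using hC))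
  have hpull := condExp_mul_of_stronglyMeasurable_left hfT hfY hY
  have e1 : (fun ω => f (T ω) * Y ω) = (fun ω => f (T ω)) * Y := rfl
  rw [e1, ← integral_condExp hm (f := (fun ω => f (T ω)) * Y)]
  refine integral_congr_ae (hpull.trans ?_)
  filter_upwards [hcond] with ω hω
  simp [Pi.mul_apply, hω]


/-- Bellman equation for the variance of the λ-return: under the λ-return recursion
bootstrapped with the true value function `j`, the variance `v` satisfies a TD
fixed-point equation with meta-reward `δ²` and discount `γ²λ²`. -/
theorem variance_bellman_equation {Ω : Type*} [MeasurableSpace Ω] (μ : Measure Ω)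
    [IsProbabilityMeasure μ]
    {S : Type*} [Fintype S] [Nonempty S] [MeasurableSpace S] [MeasurableSingletonClass S]
    (St St1 : Ω → S) (R G G' : Ω → ℝ)
    (hSt : Measurable St) (hSt1 : Measurable St1)
    (hR : Measurable R) (hG : Measurable G) (hG' : Measurable G')
    (hGsq : MemLp G 2 μ) (hG'sq : MemLp G' 2 μ) (hRbd : ∃ C, ∀ ω, |R ω| ≤ C)
    (γ lam : S → ℝ) (hγ : ∀ s, γ s ∈ Set.Icc (0 : ℝ) 1) (hlam : ∀ s, lam s ∈ Set.Icc (0 : ℝ) 1)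
    (j v : S → ℝ)
    -- (i) the λ-return recursion bootstrapped with j
    (hrec : ∀ᵐ ω ∂μ, G ω = R ω + γ (St1 ω) * (1 - lam (St1 ω)) * j (St1 ω)
        + γ (St1 ω) * lam (St1 ω) * G' ω)
    -- (ii) j and v are the conditional mean and variance of G given S_t = s
    (hj : ∀ s : S, 0 < μ {ω | St ω = s} → j s = ∫ ω, G ω ∂(μ[|{ω | St ω = s}]))
    (hv : ∀ s : S, 0 < μ {ω | St ω = s} →
        v s = ∫ ω, (G ω - j s) ^ 2 ∂(μ[|{ω | St ω = s}]))
    -- (iii) conditional expectation of G' given 𝒢 equals j(S_{t+1})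
    (hcondG' : μ[G' | MeasurableSpace.comap (fun ω => (St ω, R ω, St1 ω)) inferInstance]
        =ᵐ[μ] fun ω => j (St1 ω))
    -- (iv) conditional expectation of (G' − j(S_{t+1}))² given 𝒢 equals v(S_{t+1})
    (hcondVar : μ[(fun ω => (G' ω - j (St1 ω)) ^ 2) |
          MeasurableSpace.comap (fun ω => (St ω, R ω, St1 ω)) inferInstance]
        =ᵐ[μ] fun ω => v (St1 ω))
    (δ : Ω → ℝ) (hδ : δ = fun ω => R ω + γ (St1 ω) * j (St1 ω) - j (St ω)) :
    ∀ s : S, 0 < μ {ω | St ω = s} →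
      j s = ∫ ω, (R ω + γ (St1 ω) * j (St1 ω)) ∂(μ[|{ω | St ω = s}]) ∧
      v s = ∫ ω, (δ ω ^ 2 + γ (St1 ω) ^ 2 * lam (St1 ω) ^ 2 * v (St1 ω))
          ∂(μ[|{ω | St ω = s}]) := by
  classical
  obtain ⟨CR₀, hCR₀⟩ := hRbd
  set CR := |CR₀| with hCR_def
  have hCR : ∀ ω, |R ω| ≤ CR := fun ω => (hCR₀ ω).trans (le_abs_self _)
  have hCR0 : 0 ≤ CR := abs_nonneg _
  obtain ⟨Cj, hCj⟩ := Finite.exists_le (fun s => |j s|)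
  have hCj0 : 0 ≤ Cj := (abs_nonneg _).trans (hCj (Classical.arbitrary S))
  set T : Ω → S × ℝ × S := fun ω => (St ω, R ω, St1 ω) with hT_def
  have hT : Measurable T := hSt.prodMk (hR.prodMk hSt1)
  have hmS : ∀ (g : S → ℝ), Measurable g := fun g => measurable_of_countable g
  have hγ1 : ∀ s', |γ s'| ≤ 1 := fun s' => abs_le.2 ⟨by linarith [(hγ s').1], (hγ s').2⟩
  have hlam1 : ∀ s', |lam s'| ≤ 1 :=
    fun s' => abs_le.2 ⟨by linarith [(hlam s').1], (hlam s').2⟩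
  have hγlam1 : ∀ s', |γ s' * lam s'| ≤ 1 := by
    intro s'
    rw [abs_mul]
    calc |γ s'| * |lam s'| ≤ 1 * 1 :=
          mul_le_mul (hγ1 s') (hlam1 s') (abs_nonneg _) zero_le_one
      _ = 1 := by ring
  have intbdd : ∀ (X : Ω → ℝ), Measurable X → ∀ (C : ℝ), (∀ ω, |X ω| ≤ C) → Integrable X μ := by
    intro X hX C hC
    exact (integrable_const C).mono' hX.aestronglyMeasurable
      (Filter.Eventually.of_forall (by simpa [Real.norm_eq_abs] using hC))
  have intG' : Integrable G' μ := hG'sq.integrable one_le_two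
  have hjSt1m : Measurable (fun ω => j (St1 ω)) := (hmS j).comp hSt1
  have hcm : Measurable (fun ω => γ (St1 ω) * lam (St1 ω)) :=
    ((hmS γ).comp hSt1).mul ((hmS lam).comp hSt1)
  have hjmem : MemLp (fun ω => j (St1 ω)) 2 μ :=
    (memLp_top_of_bound hjSt1m.aestronglyMeasurable Cj
      (Filter.Eventually.of_forall fun ω => by
        simpa [Real.norm_eq_abs] using hCj (St1 ω))).mono_exponent le_top
  have intYsq : Integrable (fun ω => (G' ω - j (St1 ω)) ^ 2) μ :=
    (hG'sq.sub hjmem).integrable_sq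
  have intY : Integrable (fun ω => G' ω - j (St1 ω)) μ :=
    intG'.sub (intbdd _ hjSt1m Cj fun ω => hCj (St1 ω))
  intro s hs
  set A : Set Ω := {ω | St ω = s} with hA_def
  have hA : MeasurableSet A := hSt (measurableSet_singleton s)
  -- indicator conversion
  have indconv : ∀ (g : (S × ℝ × S) → ℝ) (X : Ω → ℝ),
      ∫ ω, (if (T ω).1 = s then (1:ℝ) else 0) * g (T ω) * X ω ∂μ
        = ∫ ω in A, g (T ω) * X ω ∂μ := by
    intro g X
    rw [← integral_indicator hA]
    refine integral_congr_ae (Filter.Eventually.of_forall fun ω => ?_)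
    by_cases hω : St ω = s <;>
      simp [A, Set.indicator, T, hω]
  have hites : MeasurableSet {x : S × ℝ × S | x.1 = s} :=
    measurable_fst (measurableSet_singleton s)
  have key : ∀ (g : (S × ℝ × S) → ℝ), Measurable g → ∀ (C : ℝ), (∀ ω, |g (T ω)| ≤ C) →
      ∀ (Y h : Ω → ℝ), Integrable Y μ →
      (μ[Y | MeasurableSpace.comap T inferInstance] =ᵐ[μ] h) →
      ∫ ω in A, g (T ω) * Y ω ∂μ = ∫ ω in A, g (T ω) * h ω ∂μ := by
    intro g hg C hCg Y h hYint hcond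
    have hf : Measurable (fun x : S × ℝ × S => (if x.1 = s then (1:ℝ) else 0) * g x) :=
      (Measurable.ite hites measurable_const measurable_const).mul hg
    have hb : ∀ ω, |(if (T ω).1 = s then (1:ℝ) else 0) * g (T ω)| ≤ |C| := by
      intro ω
      rw [abs_mul]
      have h1 : |(if (T ω).1 = s then (1:ℝ) else 0)| ≤ 1 := by split <;> simp
      calc |(if (T ω).1 = s then (1:ℝ) else 0)| * |g (T ω)| ≤ 1 * |C| :=
            mul_le_mul h1 ((hCg ω).trans (le_abs_self C)) (abs_nonneg _) zero_le_one
        _ = |C| := one_mul _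
    have := integral_mul_eq_of_condexp μ hT hYint hcond hf hb
    rwa [indconv g Y, indconv g h] at this
  have zero_term : ∀ (g : (S × ℝ × S) → ℝ), Measurable g → ∀ (C : ℝ),
      (∀ ω, |g (T ω)| ≤ C) →
      ∫ ω in A, g (T ω) * G' ω ∂μ = ∫ ω in A, g (T ω) * j (St1 ω) ∂μ := by
    intro g hg C hCg
    exact key g hg C hCg G' (fun ω => j (St1 ω)) intG' hcondG'
  have var_term : ∀ (g : (S × ℝ × S) → ℝ), Measurable g → ∀ (C : ℝ),
      (∀ ω, |g (T ω)| ≤ C) →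
      ∫ ω in A, g (T ω) * (G' ω - j (St1 ω)) ^ 2 ∂μ
        = ∫ ω in A, g (T ω) * v (St1 ω) ∂μ := by
    intro g hg C hCg
    exact key g hg C hCg (fun ω => (G' ω - j (St1 ω)) ^ 2) (fun ω => v (St1 ω)) intYsq hcondVar
  -- PART 1
  have intRγ : Integrable (fun ω => R ω + γ (St1 ω) * (1 - lam (St1 ω)) * j (St1 ω)) μ := by
    refine intbdd _ (hR.add ((((hmS γ).comp hSt1).mul
      ((measurable_const.sub ((hmS lam).comp hSt1)))).mul hjSt1m)) (CR + Cj) fun ω => ?_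
    have h3 : |γ (St1 ω) * (1 - lam (St1 ω)) * j (St1 ω)| ≤ Cj := by
      rw [abs_mul, abs_mul]
      have h4 : |1 - lam (St1 ω)| ≤ 1 :=
        abs_le.2 ⟨by linarith [(hlam (St1 ω)).2], by linarith [(hlam (St1 ω)).1]⟩
      calc |γ (St1 ω)| * |1 - lam (St1 ω)| * |j (St1 ω)| ≤ 1 * 1 * Cj :=
            mul_le_mul (mul_le_mul (hγ1 (St1 ω)) h4 (abs_nonneg _) zero_le_one)
              (hCj (St1 ω)) (abs_nonneg _) (by norm_num)
        _ = Cj := by ring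
    calc |R ω + γ (St1 ω) * (1 - lam (St1 ω)) * j (St1 ω)| ≤ |R ω| + _ := abs_add_le _ _
      _ ≤ CR + Cj := add_le_add (hCR ω) h3
  have intcG' : Integrable (fun ω => γ (St1 ω) * lam (St1 ω) * G' ω) μ := by
    exact intG'.bdd_mul (c := 1) hcm.aestronglyMeasurable
      (Filter.Eventually.of_forall fun ω => by
        rw [Real.norm_eq_abs]; exact hγlam1 (St1 ω))
  have intcj : Integrable (fun ω => γ (St1 ω) * lam (St1 ω) * j (St1 ω)) μ := by
    refine intbdd _ (hcm.mul hjSt1m) Cj fun ω => ?_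
    rw [abs_mul]
    calc |γ (St1 ω) * lam (St1 ω)| * |j (St1 ω)| ≤ 1 * Cj :=
          mul_le_mul (hγlam1 (St1 ω)) (hCj (St1 ω)) (abs_nonneg _) zero_le_one
      _ = Cj := one_mul _
  have claim1 : ∫ ω in A, G ω ∂μ = ∫ ω in A, (R ω + γ (St1 ω) * j (St1 ω)) ∂μ := by
    have step3' := zero_term (fun x => γ x.2.2 * lam x.2.2)
      (((hmS γ).comp (measurable_snd.snd)).mul ((hmS lam).comp (measurable_snd.snd))) 1
      (fun ω => by simpa [hT_def] using hγlam1 (St1 ω))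
    simp only [hT_def] at step3'
    calc ∫ ω in A, G ω ∂μ
        = ∫ ω in A, ((R ω + γ (St1 ω) * (1 - lam (St1 ω)) * j (St1 ω))
            + γ (St1 ω) * lam (St1 ω) * G' ω) ∂μ :=
          integral_congr_ae (ae_restrict_of_ae (hrec.mono fun ω hω => by rw [hω]))
      _ = (∫ ω in A, (R ω + γ (St1 ω) * (1 - lam (St1 ω)) * j (St1 ω)) ∂μ)
            + ∫ ω in A, γ (St1 ω) * lam (St1 ω) * G' ω ∂μ :=
          integral_add intRγ.restrict intcG'.restrict
      _ = (∫ ω in A, (R ω + γ (St1 ω) * (1 - lam (St1 ω)) * j (St1 ω)) ∂μ)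
            + ∫ ω in A, γ (St1 ω) * lam (St1 ω) * j (St1 ω) ∂μ := by rw [step3']
      _ = ∫ ω in A, ((R ω + γ (St1 ω) * (1 - lam (St1 ω)) * j (St1 ω))
            + γ (St1 ω) * lam (St1 ω) * j (St1 ω)) ∂μ :=
          (integral_add intRγ.restrict intcj.restrict).symm
      _ = ∫ ω in A, (R ω + γ (St1 ω) * j (St1 ω)) ∂μ :=
          integral_congr_ae (Filter.Eventually.of_forall fun ω => by ring)
  -- PART 2
  set CD := CR + Cj + Cj with hCD_def
  have hDbd : ∀ ω, |R ω + γ (St1 ω) * j (St1 ω) - j s| ≤ CD := by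
    intro ω
    have h1 : |γ (St1 ω) * j (St1 ω)| ≤ Cj := by
      rw [abs_mul]
      calc |γ (St1 ω)| * |j (St1 ω)| ≤ 1 * Cj :=
            mul_le_mul (hγ1 (St1 ω)) (hCj (St1 ω)) (abs_nonneg _) zero_le_one
        _ = Cj := one_mul _
    calc |R ω + γ (St1 ω) * j (St1 ω) - j s|
        ≤ |R ω + γ (St1 ω) * j (St1 ω)| + |j s| := abs_sub _ _
      _ ≤ (|R ω| + |γ (St1 ω) * j (St1 ω)|) + |j s| := by
          exact add_le_add (abs_add_le _ _) le_rfl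
      _ ≤ (CR + Cj) + Cj := add_le_add (add_le_add (hCR ω) h1) (hCj s)
  have hDm : Measurable (fun ω => R ω + γ (St1 ω) * j (St1 ω) - j s) :=
    (hR.add (((hmS γ).comp hSt1).mul hjSt1m)).sub measurable_const
  have intD2 : Integrable (fun ω => (R ω + γ (St1 ω) * j (St1 ω) - j s) ^ 2) μ := by
    refine intbdd _ (hDm.pow_const 2) (CD ^ 2) fun ω => ?_
    rw [abs_pow]
    exact pow_le_pow_left₀ (abs_nonneg _) (hDbd ω) 2
  have intcross : Integrable (fun ω =>
      2 * ((R ω + γ (St1 ω) * j (St1 ω) - j s) * (γ (St1 ω) * lam (St1 ω)))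
        * (G' ω - j (St1 ω))) μ := by
    refine intY.bdd_mul (c := 2 * CD)
      ((measurable_const.mul (hDm.mul hcm)).aestronglyMeasurable)
      (Filter.Eventually.of_forall fun ω => ?_)
    rw [Real.norm_eq_abs, abs_mul, abs_mul, abs_two]
    calc 2 * (|R ω + γ (St1 ω) * j (St1 ω) - j s| * |γ (St1 ω) * lam (St1 ω)|)
        ≤ 2 * (CD * 1) := by
          have h1 := hDbd ω
          have h2 := hγlam1 (St1 ω)
          have h3 := abs_nonneg (R ω + γ (St1 ω) * j (St1 ω) - j s)
          have h4 := abs_nonneg (γ (St1 ω) * lam (St1 ω))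
          nlinarith
      _ = 2 * CD := by ring
  have intquad : Integrable (fun ω =>
      (γ (St1 ω) * lam (St1 ω)) ^ 2 * (G' ω - j (St1 ω)) ^ 2) μ := by
    refine intYsq.bdd_mul (c := 1) ((hcm.pow_const 2).aestronglyMeasurable)
      (Filter.Eventually.of_forall fun ω => ?_)
    rw [Real.norm_eq_abs, abs_pow]
    calc |γ (St1 ω) * lam (St1 ω)| ^ 2 ≤ 1 ^ 2 :=
          pow_le_pow_left₀ (abs_nonneg _) (hγlam1 (St1 ω)) 2
      _ = 1 := one_pow 2
  have intDcG' : Integrable (fun ω =>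
      (R ω + γ (St1 ω) * j (St1 ω) - j s) * (γ (St1 ω) * lam (St1 ω)) * G' ω) μ := by
    refine intG'.bdd_mul (c := CD) ((hDm.mul hcm).aestronglyMeasurable)
      (Filter.Eventually.of_forall fun ω => ?_)
    rw [Real.norm_eq_abs, abs_mul]
    have h1 := hDbd ω
    have h2 := hγlam1 (St1 ω)
    have h3 := abs_nonneg (R ω + γ (St1 ω) * j (St1 ω) - j s)
    have h4 := abs_nonneg (γ (St1 ω) * lam (St1 ω))
    nlinarith
  have intDcj : Integrable (fun ω =>
      (R ω + γ (St1 ω) * j (St1 ω) - j s) * (γ (St1 ω) * lam (St1 ω)) * j (St1 ω)) μ := by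
    refine intbdd _ ((hDm.mul hcm).mul hjSt1m) (CD * Cj) fun ω => ?_
    rw [abs_mul, abs_mul]
    have hCD0 : (0:ℝ) ≤ CD := by rw [hCD_def]; linarith
    calc |R ω + γ (St1 ω) * j (St1 ω) - j s| * |γ (St1 ω) * lam (St1 ω)| * |j (St1 ω)|
        ≤ CD * 1 * Cj :=
          mul_le_mul (mul_le_mul (hDbd ω) (hγlam1 (St1 ω)) (abs_nonneg _) hCD0)
            (hCj (St1 ω)) (abs_nonneg _) (by linarith)
      _ = CD * Cj := by ring
  have cross : ∫ ω in A,
      2 * ((R ω + γ (St1 ω) * j (St1 ω) - j s) * (γ (St1 ω) * lam (St1 ω)))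
        * (G' ω - j (St1 ω)) ∂μ = 0 := by
    have hz := zero_term
      (fun x => (x.2.1 + γ x.2.2 * j x.2.2 - j s) * (γ x.2.2 * lam x.2.2))
      ((((measurable_snd.fst).add (((hmS γ).comp measurable_snd.snd).mul
          ((hmS j).comp measurable_snd.snd))).sub measurable_const).mul
        (((hmS γ).comp measurable_snd.snd).mul ((hmS lam).comp measurable_snd.snd)))
      CD (fun ω => by
        simp only [hT_def]
        rw [abs_mul]
        have h1 := hDbd ω
        have h2 := hγlam1 (St1 ω)
        have h3 := abs_nonneg (R ω + γ (St1 ω) * j (St1 ω) - j s)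
        have h4 := abs_nonneg (γ (St1 ω) * lam (St1 ω))
        nlinarith)
    simp only [hT_def] at hz
    have e : ∫ ω in A,
        2 * ((R ω + γ (St1 ω) * j (St1 ω) - j s) * (γ (St1 ω) * lam (St1 ω)))
          * (G' ω - j (St1 ω)) ∂μ
        = 2 * ((∫ ω in A, (R ω + γ (St1 ω) * j (St1 ω) - j s) * (γ (St1 ω) * lam (St1 ω))
              * G' ω ∂μ)
            - ∫ ω in A, (R ω + γ (St1 ω) * j (St1 ω) - j s) * (γ (St1 ω) * lam (St1 ω))
              * j (St1 ω) ∂μ) := by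
      rw [← integral_sub intDcG'.restrict intDcj.restrict, ← integral_const_mul]
      exact integral_congr_ae (Filter.Eventually.of_forall fun ω => by ring)
    rw [e, hz]
    ring
  have quad := var_term (fun x => (γ x.2.2 * lam x.2.2) ^ 2)
    ((((hmS γ).comp measurable_snd.snd).mul ((hmS lam).comp measurable_snd.snd)).pow_const 2)
    1 (fun ω => by
      simp only [hT_def]
      rw [abs_pow]
      calc |γ (St1 ω) * lam (St1 ω)| ^ 2 ≤ 1 ^ 2 :=
            pow_le_pow_left₀ (abs_nonneg _) (hγlam1 (St1 ω)) 2
        _ = 1 := one_pow 2)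
  simp only [hT_def] at quad
  have intquadv : Integrable (fun ω =>
      (γ (St1 ω) * lam (St1 ω)) ^ 2 * v (St1 ω)) μ := by
    obtain ⟨Cv, hCv⟩ := Finite.exists_le (fun s => |v s|)
    refine intbdd _ ((hcm.pow_const 2).mul ((hmS v).comp hSt1)) Cv fun ω => ?_
    rw [abs_mul, abs_pow]
    have h1 : |γ (St1 ω) * lam (St1 ω)| ^ 2 ≤ 1 :=
      (pow_le_pow_left₀ (abs_nonneg _) (hγlam1 (St1 ω)) 2).trans_eq (one_pow 2)
    calc |γ (St1 ω) * lam (St1 ω)| ^ 2 * |v (St1 ω)| ≤ 1 * Cv :=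
          mul_le_mul h1 (hCv (St1 ω)) (abs_nonneg _) zero_le_one
      _ = Cv := one_mul _
  have claim2 : ∫ ω in A, (G ω - j s) ^ 2 ∂μ
      = ∫ ω in A, (δ ω ^ 2 + γ (St1 ω) ^ 2 * lam (St1 ω) ^ 2 * v (St1 ω)) ∂μ := by
    calc ∫ ω in A, (G ω - j s) ^ 2 ∂μ
        = ∫ ω in A, ((R ω + γ (St1 ω) * j (St1 ω) - j s) ^ 2
            + 2 * ((R ω + γ (St1 ω) * j (St1 ω) - j s) * (γ (St1 ω) * lam (St1 ω)))
              * (G' ω - j (St1 ω))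
            + (γ (St1 ω) * lam (St1 ω)) ^ 2 * (G' ω - j (St1 ω)) ^ 2) ∂μ := by
          refine integral_congr_ae ?_
          filter_upwards [ae_restrict_of_ae hrec] with ω hω
          rw [hω]; ring
      _ = ((∫ ω in A, (R ω + γ (St1 ω) * j (St1 ω) - j s) ^ 2 ∂μ)
            + ∫ ω in A, 2 * ((R ω + γ (St1 ω) * j (St1 ω) - j s)
                * (γ (St1 ω) * lam (St1 ω))) * (G' ω - j (St1 ω)) ∂μ)
            + ∫ ω in A, (γ (St1 ω) * lam (St1 ω)) ^ 2 * (G' ω - j (St1 ω)) ^ 2 ∂μ := by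
          have i1 : Integrable (fun ω => (R ω + γ (St1 ω) * j (St1 ω) - j s) ^ 2
              + 2 * ((R ω + γ (St1 ω) * j (St1 ω) - j s) * (γ (St1 ω) * lam (St1 ω)))
                * (G' ω - j (St1 ω))) (μ.restrict A) :=
            intD2.restrict.add intcross.restrict
          have e1 : ∫ ω in A, ((R ω + γ (St1 ω) * j (St1 ω) - j s) ^ 2
              + 2 * ((R ω + γ (St1 ω) * j (St1 ω) - j s) * (γ (St1 ω) * lam (St1 ω)))
                * (G' ω - j (St1 ω))
              + (γ (St1 ω) * lam (St1 ω)) ^ 2 * (G' ω - j (St1 ω)) ^ 2) ∂μ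
              = (∫ ω in A, ((R ω + γ (St1 ω) * j (St1 ω) - j s) ^ 2
                + 2 * ((R ω + γ (St1 ω) * j (St1 ω) - j s) * (γ (St1 ω) * lam (St1 ω)))
                  * (G' ω - j (St1 ω))) ∂μ)
                + ∫ ω in A, (γ (St1 ω) * lam (St1 ω)) ^ 2 * (G' ω - j (St1 ω)) ^ 2 ∂μ :=
            integral_add i1 intquad.restrict
          rw [e1]
          congr 1
          exact integral_add intD2.restrict intcross.restrict
      _ = (∫ ω in A, (R ω + γ (St1 ω) * j (St1 ω) - j s) ^ 2 ∂μ)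
            + ∫ ω in A, (γ (St1 ω) * lam (St1 ω)) ^ 2 * v (St1 ω) ∂μ := by
          rw [cross, quad]; ring
      _ = ∫ ω in A, ((R ω + γ (St1 ω) * j (St1 ω) - j s) ^ 2
            + (γ (St1 ω) * lam (St1 ω)) ^ 2 * v (St1 ω)) ∂μ :=
          (integral_add intD2.restrict intquadv.restrict).symm
      _ = ∫ ω in A, (δ ω ^ 2 + γ (St1 ω) ^ 2 * lam (St1 ω) ^ 2 * v (St1 ω)) ∂μ := by
          refine setIntegral_congr_fun hA fun ω hω => ?_
          have hωs : St ω = s := hω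
          simp only [hδ, hωs]
          ring
  refine ⟨?_, ?_⟩
  · rw [hj s hs]
    simp only [ProbabilityTheory.cond, integral_smul_measure]
    rw [claim1]
  · rw [hv s hs]
    simp only [ProbabilityTheory.cond, integral_smul_measure]
    rw [claim2]
end

section
/- Let J : S → ℝ be an approximate value function and define the TD error δ = R_{t+1} + γ(S_{t+1})·J(S_{t+1}) − J(S_t). Assume: (i) μ-almost everywhere, G = R_{t+1} + γ(S_{t+1})·(1 − λ(S_{t+1}))·J(S_{t+1}) + γ(S_{t+1})·λ(S_{t+1})·G' (the λ-return recursion bootstrapped with J); (ii) for every state s with μ(S_t = s) > 0, j(s) = E[G | S_t = s] and V(s) = E[(G − j(s))² | S_t = s]; (iii) μ-almost everywhere the conditional expectation of G' given 𝒢 equals j(S_{t+1}); (iv) μ-almost everywhere the conditional expectation of (G' − J(S_{t+1}))² given 𝒢 equals V(S_{t+1}); and (v) there is a function ε : S → [0, ∞) such that (J(s) − j(s))² ≤ ε(s) for all s, and |E[ γ(S_{t+1})·λ(S_{t+1})·δ·(j(S_{t+1}) − J(S_{t+1})) | S_t = s ]| ≤ ε(s) for every s with μ(S_t = s) > 0.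 Then for every state s with μ(S_t = s) > 0: | V(s) − E[ δ² + γ(S_{t+1})²·λ(S_{t+1})²·V(S_{t+1}) | S_t = s ] | ≤ 3·ε(s). -/
open MeasureTheory ProbabilityTheory

/-- Pull-out property at the level of set integrals, for the comap σ-algebra of a map `T`. -/
lemma my_pullout_setIntegral {Ω α : Type*} [inst : MeasurableSpace Ω] [MeasurableSpace α]
    (μ : Measure Ω) [IsProbabilityMeasure μ] {T : Ω → α} (hT : Measurable T)
    {φ : α → ℝ} (hφ : Measurable φ) {C : ℝ} (hbd : ∀ ω, |φ (T ω)| ≤ C)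
    {X Y : Ω → ℝ} (hX : Integrable X μ)
    (hXY : μ[X | MeasurableSpace.comap T inferInstance] =ᵐ[μ] Y)
    {B : Set α} (hB : MeasurableSet B) :
    ∫ ω in T ⁻¹' B, φ (T ω) * X ω ∂μ = ∫ ω in T ⁻¹' B, φ (T ω) * Y ω ∂μ := by
  have hm : MeasurableSpace.comap T inferInstance ≤ inst := hT.comap_le
  have hfm : StronglyMeasurable[MeasurableSpace.comap T inferInstance] fun ω => φ (T ω) :=
    (hφ.comp (comap_measurable T)).stronglyMeasurable
  have hfX : Integrable ((fun ω => φ (T ω)) * X) μ :=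
    hX.bdd_mul (hφ.comp hT).aestronglyMeasurable
      (c := C) (ae_of_all _ fun ω => by simpa [Real.norm_eq_abs] using hbd ω)
  have h1 : μ[(fun ω => φ (T ω)) * X | MeasurableSpace.comap T inferInstance]
      =ᵐ[μ] (fun ω => φ (T ω)) * μ[X | MeasurableSpace.comap T inferInstance] :=
    condExp_mul_of_stronglyMeasurable_left hfm hfX hX
  have hAm : MeasurableSet[MeasurableSpace.comap T inferInstance] (T ⁻¹' B) :=
    comap_measurable T hB
  have hA : MeasurableSet[inst] (T ⁻¹' B) := hm _ hAm
  have h2 : ∫ ω in T ⁻¹' B, φ (T ω) * X ω ∂μ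
      = ∫ ω in T ⁻¹' B, (μ[(fun ω => φ (T ω)) * X | MeasurableSpace.comap T inferInstance]) ω ∂μ :=
    (setIntegral_condExp hm hfX hAm).symm
  rw [h2]
  refine setIntegral_congr_ae hA ?_
  filter_upwards [h1, hXY] with ω hω hω' _
  rw [hω, Pi.mul_apply, hω']

/-- Conditional expectation of `X - ψ ∘ T` given the σ-algebra generated by `T`. -/
lemma my_condexp_sub_comp {Ω α : Type*} [inst : MeasurableSpace Ω] [MeasurableSpace α]
    (μ : Measure Ω) [IsProbabilityMeasure μ] {T : Ω → α} (hT : Measurable T)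
    {ψ : α → ℝ} (hψ : Measurable ψ) {C : ℝ} (hbd : ∀ ω, |ψ (T ω)| ≤ C)
    {X Y : Ω → ℝ} (hX : Integrable X μ)
    (hXY : μ[X | MeasurableSpace.comap T inferInstance] =ᵐ[μ] Y) :
    μ[(fun ω => X ω - ψ (T ω)) | MeasurableSpace.comap T inferInstance]
      =ᵐ[μ] fun ω => Y ω - ψ (T ω) := by
  have hm : MeasurableSpace.comap T inferInstance ≤ inst := hT.comap_le
  have hψint : Integrable (fun ω => ψ (T ω)) μ := by
    refine memLp_one_iff_integrable.mp ?_
    exact MemLp.of_bound (hψ.comp hT).aestronglyMeasurable C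
      (ae_of_all _ fun ω => by simpa [Real.norm_eq_abs] using hbd ω)
  have h1 : μ[X - (fun ω => ψ (T ω)) | MeasurableSpace.comap T inferInstance]
      =ᵐ[μ] μ[X | MeasurableSpace.comap T inferInstance]
        - μ[(fun ω => ψ (T ω)) | MeasurableSpace.comap T inferInstance] :=
    condExp_sub hX hψint _
  have h2 : μ[(fun ω => ψ (T ω)) | MeasurableSpace.comap T inferInstance]
      = fun ω => ψ (T ω) :=
    condExp_of_stronglyMeasurable hm
      ((hψ.comp (comap_measurable T)).stronglyMeasurable) hψint
  have h3 : (fun ω => X ω - ψ (T ω)) = X - fun ω => ψ (T ω) := rfl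
  rw [h3]
  filter_upwards [h1, hXY] with ω hω hω'
  rw [hω, Pi.sub_apply, hω', h2]


/-- Error bound for the Bellman equation of the variance of the λ-return when the value
function `J` used for bootstrapping is inexact: the error in the TD fixed-point equation
for the variance `V` is at most `3·ε s`. -/
theorem variance_bellman_approx_error {Ω : Type*} [MeasurableSpace Ω] (μ : Measure Ω)
    [IsProbabilityMeasure μ]
    {S : Type*} [Fintype S] [Nonempty S] [MeasurableSpace S] [MeasurableSingletonClass S]
    (St St1 : Ω → S) (R G G' : Ω → ℝ)
    (hSt : Measurable St) (hSt1 : Measurable St1)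
    (hR : Measurable R) (hG : Measurable G) (hG' : Measurable G')
    (hGsq : MemLp G 2 μ) (hG'sq : MemLp G' 2 μ) (hRbd : ∃ C, ∀ ω, |R ω| ≤ C)
    (γ lam : S → ℝ) (hγ : ∀ s, γ s ∈ Set.Icc (0 : ℝ) 1) (hlam : ∀ s, lam s ∈ Set.Icc (0 : ℝ) 1)
    (j V J : S → ℝ)
    (δ : Ω → ℝ) (hδ : δ = fun ω => R ω + γ (St1 ω) * J (St1 ω) - J (St ω))
    -- (i) the λ-return recursion bootstrapped with J
    (hrec : ∀ᵐ ω ∂μ, G ω = R ω + γ (St1 ω) * (1 - lam (St1 ω)) * J (St1 ω)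
        + γ (St1 ω) * lam (St1 ω) * G' ω)
    -- (ii) j and V are the conditional mean and variance of G given S_t = s
    (hj : ∀ s : S, 0 < μ {ω | St ω = s} → j s = ∫ ω, G ω ∂(μ[|{ω | St ω = s}]))
    (hV : ∀ s : S, 0 < μ {ω | St ω = s} →
        V s = ∫ ω, (G ω - j s) ^ 2 ∂(μ[|{ω | St ω = s}]))
    -- (iii) conditional expectation of G' given 𝒢 equals j(S_{t+1})
    (hcondG' : μ[G' | MeasurableSpace.comap (fun ω => (St ω, R ω, St1 ω)) inferInstance]
        =ᵐ[μ] fun ω => j (St1 ω))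
    -- (iv) conditional expectation of (G' − J(S_{t+1}))² given 𝒢 equals V(S_{t+1})
    (hcondVar : μ[(fun ω => (G' ω - J (St1 ω)) ^ 2) |
          MeasurableSpace.comap (fun ω => (St ω, R ω, St1 ω)) inferInstance]
        =ᵐ[μ] fun ω => V (St1 ω))
    -- (v) error bounds
    (ε : S → ℝ) (hε : ∀ s, 0 ≤ ε s)
    (hJerr : ∀ s, (J s - j s) ^ 2 ≤ ε s)
    (hcov : ∀ s : S, 0 < μ {ω | St ω = s} →
        |∫ ω, γ (St1 ω) * lam (St1 ω) * δ ω * (j (St1 ω) - J (St1 ω))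
            ∂(μ[|{ω | St ω = s}])| ≤ ε s) :
    ∀ s : S, 0 < μ {ω | St ω = s} →
      |V s - ∫ ω, (δ ω ^ 2 + γ (St1 ω) ^ 2 * lam (St1 ω) ^ 2 * V (St1 ω))
          ∂(μ[|{ω | St ω = s}])| ≤ 3 * ε s := by
  subst hδ
  intro s hs
  have hT : Measurable (fun ω => (St ω, R ω, St1 ω)) := hSt.prodMk (hR.prodMk hSt1)
  set A := {ω | St ω = s} with hA_def
  have hAmeas : MeasurableSet A := hSt (measurableSet_singleton s)
  have hAB : A = (fun ω => (St ω, R ω, St1 ω)) ⁻¹' ({s} ×ˢ (Set.univ : Set (ℝ × S))) := by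
    ext ω; simp [A, eq_comm]
  have hB : MeasurableSet ({s} ×ˢ (Set.univ : Set (ℝ × S))) :=
    (measurableSet_singleton s).prod .univ
  -- every real function on S is measurable and bounded
  have hmS : ∀ h : S → ℝ, Measurable h := fun h => measurable_of_countable h
  have bddS : ∀ h : S → ℝ, ∃ C, ∀ x : S, |h x| ≤ C := fun h =>
    ⟨Finset.univ.sup' Finset.univ_nonempty fun x => |h x|,
      fun x => Finset.le_sup' (fun x => |h x|) (Finset.mem_univ x)⟩
  obtain ⟨CR, hCR⟩ := hRbd
  obtain ⟨CJ, hCJ⟩ := bddS J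
  have habs1 : ∀ x : S, |γ x| ≤ 1 := by
    intro x; have h := hγ x; simp only [Set.mem_Icc] at h
    exact abs_le.mpr ⟨by linarith [h.1], h.2⟩
  have habs2 : ∀ x : S, |lam x| ≤ 1 := by
    intro x; have h := hlam x; simp only [Set.mem_Icc] at h
    exact abs_le.mpr ⟨by linarith [h.1], h.2⟩
  have hδbd : ∀ ω, |R ω + γ (St1 ω) * J (St1 ω) - J (St ω)| ≤ CR + CJ + CJ := by
    intro ω
    have h1 := hCR ω
    have h2 := hCJ (St1 ω)
    have h3 := hCJ (St ω)
    have h4 : |γ (St1 ω) * J (St1 ω)| ≤ CJ := by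
      rw [abs_mul]
      calc |γ (St1 ω)| * |J (St1 ω)| ≤ 1 * |J (St1 ω)| :=
            mul_le_mul_of_nonneg_right (habs1 _) (abs_nonneg _)
        _ = |J (St1 ω)| := one_mul _
        _ ≤ CJ := h2
    calc |R ω + γ (St1 ω) * J (St1 ω) - J (St ω)|
        ≤ |R ω + γ (St1 ω) * J (St1 ω)| + |J (St ω)| := abs_sub _ _
      _ ≤ |R ω| + |γ (St1 ω) * J (St1 ω)| + |J (St ω)| := by
          linarith [abs_add_le (R ω) (γ (St1 ω) * J (St1 ω))]
      _ ≤ CR + CJ + CJ := by linarith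
  -- integrability over μ
  have hG'int : Integrable G' μ := hG'sq.integrable one_le_two
  have hGint : Integrable G μ := hGsq.integrable one_le_two
  have hJSt1_meas : Measurable fun ω => J (St1 ω) := (hmS J).comp hSt1
  have hJSt1_L2 : MemLp (fun ω => J (St1 ω)) 2 μ :=
    MemLp.of_bound hJSt1_meas.aestronglyMeasurable CJ
      (ae_of_all _ fun ω => by simpa [Real.norm_eq_abs] using hCJ (St1 ω))
  have hD2 : MemLp (fun ω => G' ω - J (St1 ω)) 2 μ := hG'sq.sub hJSt1_L2
  have hDint : Integrable (fun ω => G' ω - J (St1 ω)) μ := hD2.integrable one_le_two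
  have hD2sq : Integrable (fun ω => (G' ω - J (St1 ω)) ^ 2) μ := hD2.integrable_sq
  have hδmeas : Measurable fun ω => R ω + γ (St1 ω) * J (St1 ω) - J (St ω) :=
    (hR.add (((hmS γ).comp hSt1).mul hJSt1_meas)).sub ((hmS J).comp hSt)
  have hδsq_int : Integrable (fun ω => (R ω + γ (St1 ω) * J (St1 ω) - J (St ω)) ^ 2) μ := by
    refine memLp_one_iff_integrable.mp ?_
    refine MemLp.of_bound (hδmeas.pow_const 2).aestronglyMeasurable ((CR + CJ + CJ) ^ 2)
      (ae_of_all _ fun ω => ?_)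
    rw [Real.norm_eq_abs, abs_pow]
    exact pow_le_pow_left₀ (abs_nonneg _) (hδbd ω) 2
  -- transfer of integrability to the conditional measure
  have hμAne : (μ A)⁻¹ ≠ ⊤ := ENNReal.inv_ne_top.mpr hs.ne'
  have hcond_int : ∀ {f : Ω → ℝ}, Integrable f μ → Integrable f μ[|A] := by
    intro f hf
    rw [ProbabilityTheory.cond]
    exact (hf.restrict).smul_measure hμAne
  haveI hνprob : IsProbabilityMeasure μ[|A] := cond_isProbabilityMeasure hs.ne'
  have hcond_eq : ∀ f : Ω → ℝ, ∫ ω, f ω ∂μ[|A] = (μ A).toReal⁻¹ * ∫ ω in A, f ω ∂μ := by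
    intro f
    rw [ProbabilityTheory.cond, integral_smul_measure, ENNReal.toReal_inv, smul_eq_mul]
  -- a.e. facts under the conditional measure
  have hac : μ[|A] ≪ μ := cond_absolutelyContinuous
  have haeA : ∀ᵐ ω ∂μ[|A], St ω = s := by
    rw [ae_iff]
    have hset : {ω | ¬ St ω = s} = Aᶜ := by ext ω; simp [A]
    rw [hset, ProbabilityTheory.cond, Measure.smul_apply,
      Measure.restrict_apply hAmeas.compl]
    simp
  set c := J s - j s with hc_def
  -- the pointwise expansion, a.e. under the conditional measure
  have hexp : ∀ᵐ ω ∂μ[|A], (G ω - j s) ^ 2 =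
      (R ω + γ (St1 ω) * J (St1 ω) - J (St ω)) ^ 2
        + γ (St1 ω) ^ 2 * lam (St1 ω) ^ 2 * (G' ω - J (St1 ω)) ^ 2
        + 2 * (γ (St1 ω) * lam (St1 ω) * (R ω + γ (St1 ω) * J (St1 ω) - J (St ω))
            * (G' ω - J (St1 ω)))
        + 2 * c * (G ω - j s) - c ^ 2 := by
    filter_upwards [hac hrec, haeA] with ω hrecω hsω
    rw [hrecω, hsω, hc_def]
    ring
  -- integrability of the pieces under the conditional measure
  have i1 : Integrable (fun ω => (R ω + γ (St1 ω) * J (St1 ω) - J (St ω)) ^ 2) μ[|A] :=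
    hcond_int hδsq_int
  have hglsq_bd : ∀ x : S, |γ x ^ 2 * lam x ^ 2| ≤ 1 := by
    intro x
    rw [abs_mul, abs_pow, abs_pow]
    calc |γ x| ^ 2 * |lam x| ^ 2 ≤ 1 ^ 2 * 1 ^ 2 :=
          mul_le_mul (pow_le_pow_left₀ (abs_nonneg _) (habs1 x) 2)
            (pow_le_pow_left₀ (abs_nonneg _) (habs2 x) 2)
            (pow_nonneg (abs_nonneg _) 2) (by norm_num)
      _ = 1 := by norm_num
  have i2 : Integrable
      (fun ω => γ (St1 ω) ^ 2 * lam (St1 ω) ^ 2 * (G' ω - J (St1 ω)) ^ 2) μ[|A] := by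
    refine hcond_int (hD2sq.bdd_mul (c := 1) ?_ (ae_of_all _ fun ω => ?_))
    · exact ((((hmS γ).comp hSt1).pow_const 2).mul
        (((hmS lam).comp hSt1).pow_const 2)).aestronglyMeasurable
    · rw [Real.norm_eq_abs]; exact hglsq_bd (St1 ω)
  have hfabs : ∀ ω, |γ (St1 ω) * lam (St1 ω) * (R ω + γ (St1 ω) * J (St1 ω) - J (St ω))|
      ≤ 1 * 1 * (CR + CJ + CJ) := by
    intro ω
    rw [abs_mul, abs_mul]
    exact mul_le_mul (mul_le_mul (habs1 _) (habs2 _) (abs_nonneg _) zero_le_one)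
      (hδbd ω) (abs_nonneg _) (by norm_num)
  have hfmeas : Measurable fun ω => γ (St1 ω) * lam (St1 ω)
      * (R ω + γ (St1 ω) * J (St1 ω) - J (St ω)) :=
    (((hmS γ).comp hSt1).mul ((hmS lam).comp hSt1)).mul hδmeas
  have hab_int : Integrable (fun ω => γ (St1 ω) * lam (St1 ω)
      * (R ω + γ (St1 ω) * J (St1 ω) - J (St ω)) * (G' ω - J (St1 ω))) μ :=
    hDint.bdd_mul hfmeas.aestronglyMeasurable
      (c := 1 * 1 * (CR + CJ + CJ)) (ae_of_all _ fun ω => by rw [Real.norm_eq_abs]; exact hfabs ω)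
  have i3 : Integrable (fun ω => 2 * (γ (St1 ω) * lam (St1 ω)
      * (R ω + γ (St1 ω) * J (St1 ω) - J (St ω)) * (G' ω - J (St1 ω)))) μ[|A] :=
    (hcond_int hab_int).const_mul 2
  have i4 : Integrable (fun ω => 2 * c * (G ω - j s)) μ[|A] :=
    ((hcond_int hGint).sub (integrable_const (j s))).const_mul (2 * c)
  -- integral of G - j s is zero
  have hIG : ∫ ω, (G ω - j s) ∂μ[|A] = 0 := by
    rw [integral_sub (hcond_int hGint) (integrable_const _), integral_const]
    simp [← hj s hs]
    rw [hj s hs]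
    exact sub_self _
  -- split the integral
  have hVsplit : V s = (∫ ω, (R ω + γ (St1 ω) * J (St1 ω) - J (St ω)) ^ 2 ∂μ[|A])
      + (∫ ω, γ (St1 ω) ^ 2 * lam (St1 ω) ^ 2 * (G' ω - J (St1 ω)) ^ 2 ∂μ[|A])
      + 2 * (∫ ω, γ (St1 ω) * lam (St1 ω) * (R ω + γ (St1 ω) * J (St1 ω) - J (St ω))
          * (G' ω - J (St1 ω)) ∂μ[|A])
      - c ^ 2 := by
    have i12 : Integrable (fun ω => (R ω + γ (St1 ω) * J (St1 ω) - J (St ω)) ^ 2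
        + γ (St1 ω) ^ 2 * lam (St1 ω) ^ 2 * (G' ω - J (St1 ω)) ^ 2) μ[|A] := i1.add i2
    have i123 : Integrable (fun ω => (R ω + γ (St1 ω) * J (St1 ω) - J (St ω)) ^ 2
        + γ (St1 ω) ^ 2 * lam (St1 ω) ^ 2 * (G' ω - J (St1 ω)) ^ 2
        + 2 * (γ (St1 ω) * lam (St1 ω) * (R ω + γ (St1 ω) * J (St1 ω) - J (St ω))
            * (G' ω - J (St1 ω)))) μ[|A] := i12.add i3
    have i1234 : Integrable (fun ω => (R ω + γ (St1 ω) * J (St1 ω) - J (St ω)) ^ 2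
        + γ (St1 ω) ^ 2 * lam (St1 ω) ^ 2 * (G' ω - J (St1 ω)) ^ 2
        + 2 * (γ (St1 ω) * lam (St1 ω) * (R ω + γ (St1 ω) * J (St1 ω) - J (St ω))
            * (G' ω - J (St1 ω)))
        + 2 * c * (G ω - j s)) μ[|A] := i123.add i4
    rw [hV s hs, integral_congr_ae hexp]
    rw [integral_sub i1234 (integrable_const _),
      integral_add i123 i4, integral_add i12 i3,
      integral_add i1 i2, integral_const, integral_const_mul, integral_const_mul, hIG]
    simp
  -- replace the two conditional pieces using the tower property
  have hb2 : (∫ ω, γ (St1 ω) ^ 2 * lam (St1 ω) ^ 2 * (G' ω - J (St1 ω)) ^ 2 ∂μ[|A])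
      = ∫ ω, γ (St1 ω) ^ 2 * lam (St1 ω) ^ 2 * V (St1 ω) ∂μ[|A] := by
    rw [hcond_eq, hcond_eq, hAB]
    congr 1
    exact my_pullout_setIntegral μ hT
      (φ := fun p : S × ℝ × S => γ p.2.2 ^ 2 * lam p.2.2 ^ 2)
      (((hmS γ).comp (measurable_snd.comp measurable_snd)).pow_const 2 |>.mul
        (((hmS lam).comp (measurable_snd.comp measurable_snd)).pow_const 2))
      (fun ω => hglsq_bd (St1 ω)) hD2sq hcondVar hB
  have hcondD : μ[(fun ω => G' ω - J (St1 ω)) |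
        MeasurableSpace.comap (fun ω => (St ω, R ω, St1 ω)) inferInstance]
      =ᵐ[μ] fun ω => j (St1 ω) - J (St1 ω) :=
    my_condexp_sub_comp μ hT (ψ := fun p : S × ℝ × S => J p.2.2)
      ((hmS J).comp (measurable_snd.comp measurable_snd))
      (fun ω => hCJ (St1 ω)) hG'int hcondG'
  have hab : (∫ ω, γ (St1 ω) * lam (St1 ω) * (R ω + γ (St1 ω) * J (St1 ω) - J (St ω))
        * (G' ω - J (St1 ω)) ∂μ[|A])
      = ∫ ω, γ (St1 ω) * lam (St1 ω) * (R ω + γ (St1 ω) * J (St1 ω) - J (St ω))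
        * (j (St1 ω) - J (St1 ω)) ∂μ[|A] := by
    rw [hcond_eq, hcond_eq, hAB]
    congr 1
    exact my_pullout_setIntegral μ hT
      (φ := fun p : S × ℝ × S => γ p.2.2 * lam p.2.2 * (p.2.1 + γ p.2.2 * J p.2.2 - J p.1))
      ((((hmS γ).comp (measurable_snd.comp measurable_snd)).mul
        ((hmS lam).comp (measurable_snd.comp measurable_snd))).mul
        (((measurable_fst.comp measurable_snd).add
          (((hmS γ).comp (measurable_snd.comp measurable_snd)).mul
            ((hmS J).comp (measurable_snd.comp measurable_snd)))).sub
          ((hmS J).comp measurable_fst)))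
      (C := 1 * 1 * (CR + CJ + CJ)) (fun ω => hfabs ω)
      hDint hcondD hB
  -- split the target integral
  have hTsplit : (∫ ω, ((R ω + γ (St1 ω) * J (St1 ω) - J (St ω)) ^ 2
        + γ (St1 ω) ^ 2 * lam (St1 ω) ^ 2 * V (St1 ω)) ∂μ[|A])
      = (∫ ω, (R ω + γ (St1 ω) * J (St1 ω) - J (St ω)) ^ 2 ∂μ[|A])
        + ∫ ω, γ (St1 ω) ^ 2 * lam (St1 ω) ^ 2 * V (St1 ω) ∂μ[|A] := by
    refine integral_add i1 ?_
    refine hcond_int (memLp_one_iff_integrable.mp ?_)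
    obtain ⟨CV, hCV⟩ := bddS fun x => γ x ^ 2 * lam x ^ 2 * V x
    exact MemLp.of_bound ((hmS fun x => γ x ^ 2 * lam x ^ 2 * V x).comp
      hSt1).aestronglyMeasurable CV (ae_of_all _ fun ω => by
        rw [Real.norm_eq_abs]; exact hCV (St1 ω))
  have hkey : V s - (∫ ω, ((R ω + γ (St1 ω) * J (St1 ω) - J (St ω)) ^ 2
        + γ (St1 ω) ^ 2 * lam (St1 ω) ^ 2 * V (St1 ω)) ∂μ[|A])
      = 2 * (∫ ω, γ (St1 ω) * lam (St1 ω) * (R ω + γ (St1 ω) * J (St1 ω) - J (St ω))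
          * (j (St1 ω) - J (St1 ω)) ∂μ[|A])
        - c ^ 2 := by
    rw [hTsplit, hVsplit, hb2, hab]; ring
  have hgoal : |V s - ∫ ω, ((R ω + γ (St1 ω) * J (St1 ω) - J (St ω)) ^ 2
        + γ (St1 ω) ^ 2 * lam (St1 ω) ^ 2 * V (St1 ω)) ∂μ[|A]| ≤ 3 * ε s := by
    rw [hkey]
    have h1 := hcov s hs
    rw [abs_le] at h1 ⊢
    have h2 : c ^ 2 ≤ ε s := hJerr s
    have h3 : 0 ≤ c ^ 2 := sq_nonneg c
    constructor
    · linarith [h1.1]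
    · linarith [h1.2]
  exact hgoal
end
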